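/- For ζ = ξ + iη ∈ ℂ^{1,d-1} with η timelike, define S(ζ) = max(1/√(-η²), |ζ|), where |ζ|² = Σ_μ |ζ^μ|² is the Hermitian norm. If ζ' = ζ/ζ², then S(ζ') ≤ S(ζ)³. -/

import Mathlib

/-- The quantity S(ζ) = max(1/√(-η²), |ζ|), where η = Im ζ, η² is its Minkowski square
(signature (-,+,...,+)) and |ζ| is the Hermitian (Euclidean) norm of ζ ∈ ℂ^{1,n}. -/
noncomputable def Sfun (n : ℕ) (z0 : ℂ) (zv : Fin n → ℂ) : ℝ :=
  max (1 / Real.sqrt (-(-(z0.im) ^ 2 + ∑ i, (zv i).im ^ 2)))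
    (Real.sqrt (‖z0‖ ^ 2 + ∑ i, ‖zv i‖ ^ 2))

/-- Reverse Cauchy–Schwarz auxiliary inequality. -/
lemma revCS_aux (x y A B C : ℝ) (hA : 0 ≤ A) (hB : 0 ≤ B) (hCS : C^2 ≤ A*B)
    (hx : A < x^2) : (x^2 - A) * (y^2 - B) ≤ (C - x*y)^2 := by
  rcases eq_or_lt_of_le hA with h0 | hApos
  · have hC : C = 0 := by nlinarith [sq_nonneg C]
    subst hC
    nlinarith [mul_nonneg (sq_nonneg x) hB]
  · nlinarith [sq_nonneg (y*A - x*C),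
      mul_nonneg (le_of_lt (by linarith : (0:ℝ) < x^2 - A))
        (by linarith : (0:ℝ) ≤ A*B - C^2), hApos]

/-- Key inequality: |ζ²|² ≥ (η²)². -/
lemma key_aux (x y A B C : ℝ) (hA : 0 ≤ A) (hB : 0 ≤ B) (hCS : C^2 ≤ A*B)
    (hy : -y^2 + B < 0) :
    (-y^2 + B)^2 ≤ ((-x^2 + A) - (-y^2 + B))^2 + 4 * (-(x*y) + C)^2 := by
  rcases le_or_gt (x^2) A with h | h
  · nlinarith [sq_nonneg (-(x*y) + C),
      mul_nonneg (by linarith : (0:ℝ) ≤ -x^2 + A) (by linarith : (0:ℝ) ≤ -(-y^2 + B))]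
  · have hrcs := revCS_aux x y A B C hA hB hCS h
    nlinarith [hrcs, mul_nonneg (by linarith : (0:ℝ) ≤ x^2 - A)
      (by linarith : (0:ℝ) ≤ (x^2 - A) + 2 * (y^2 - B))]

lemma pos_aux (b ns : ℝ) (hb : b < 0) (hk : b^2 ≤ ns) : 0 < ns := by nlinarith

lemma absge_aux (M b ns : ℝ) (hk : b^2 ≤ ns) (hM2 : M^2 = ns) (hM0 : 0 ≤ M)
    (hb : b < 0) : -b ≤ M := by nlinarith

lemma sqle_aux (E S e : ℝ) (heq : e^2 = E) (hES : e ≤ S) (he : 0 ≤ e) : E ≤ S^2 := by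
  nlinarith

lemma onele_aux (s S : ℝ) (hs : 0 < s) (h : 1/s ≤ S) : 1 ≤ S * s := by
  rw [div_le_iff₀ hs] at h; linarith

lemma endA_aux (M s S E : ℝ) (hs : 0 < s) (hME : M ≤ E) (hE_S : E ≤ S^2)
    (h1 : 1 ≤ S*s) (hM : 0 ≤ M) : M / s ≤ S^3 := by
  rw [div_le_iff₀ hs]
  nlinarith [sq_nonneg S, hME, hE_S, h1, hM]

lemma endB_aux (M s S e : ℝ) (hM : 0 < M) (hMb : s^2 ≤ M) (h1 : 1 ≤ S*s)
    (he : e ≤ S) (hS0 : 0 ≤ S) (he0 : 0 ≤ e) : e / M ≤ S^3 := by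
  rw [div_le_iff₀ hM]
  nlinarith [hMb, h1, he, hS0, he0, mul_nonneg (mul_nonneg hS0 hS0) hS0,
    sq_nonneg (S*s - 1)]

set_option maxHeartbeats 1000000 in
/-- If η = Im ζ is timelike and ζ' = ζ/ζ² (complex Minkowski square), then
S(ζ') ≤ S(ζ)³. -/
theorem stmt_7 (n : ℕ) (ζ0 : ℂ) (ζv : Fin n → ℂ)
    (hη : -(ζ0.im) ^ 2 + ∑ i, (ζv i).im ^ 2 < 0) :
    Sfun n (ζ0 / (-ζ0 ^ 2 + ∑ i, (ζv i) ^ 2))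
        (fun i => ζv i / (-ζ0 ^ 2 + ∑ j, (ζv j) ^ 2)) ≤ (Sfun n ζ0 ζv) ^ 3 := by
  classical
  set w : ℂ := -ζ0 ^ 2 + ∑ i, (ζv i) ^ 2 with hw
  set ξ0 : ℝ := ζ0.re with hξ0
  set η0 : ℝ := ζ0.im with hη0
  set A : ℝ := ∑ i, (ζv i).re ^ 2 with hAdef
  set B : ℝ := ∑ i, (ζv i).im ^ 2 with hBdef
  set C : ℝ := ∑ i, (ζv i).re * (ζv i).im with hCdef
  have hA0 : 0 ≤ A := hAdef ▸ Finset.sum_nonneg fun i _ => sq_nonneg _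
  have hB0 : 0 ≤ B := hBdef ▸ Finset.sum_nonneg fun i _ => sq_nonneg _
  have hCS : C ^ 2 ≤ A * B := by
    rw [hAdef, hBdef, hCdef]
    exact Finset.sum_mul_sq_le_sq_mul_sq _ (fun i => (ζv i).re) (fun i => (ζv i).im)
  set a : ℝ := -ξ0 ^ 2 + A with hadef
  set b : ℝ := -η0 ^ 2 + B with hbdef
  set c : ℝ := -(ξ0 * η0) + C with hcdef
  have hb : b < 0 := hη
  -- real and imaginary parts of w
  have hwre : w.re = a - b := by
    rw [hw, Complex.add_re, Complex.neg_re, Complex.re_sum]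
    have h1 : ∀ i : Fin n, ((ζv i) ^ 2).re = (ζv i).re ^ 2 - (ζv i).im ^ 2 := by
      intro i; rw [sq, Complex.mul_re]; ring
    rw [Finset.sum_congr rfl fun i _ => h1 i, Finset.sum_sub_distrib]
    have h2 : (ζ0 ^ 2).re = ξ0 ^ 2 - η0 ^ 2 := by
      rw [sq, Complex.mul_re, ← hξ0, ← hη0]; ring
    rw [h2, ← hAdef, ← hBdef, hadef, hbdef]; ring
  have hwim : w.im = 2 * c := by
    rw [hw, Complex.add_im, Complex.neg_im, Complex.im_sum]
    have h1 : ∀ i : Fin n, ((ζv i) ^ 2).im = 2 * ((ζv i).re * (ζv i).im) := by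
      intro i; rw [sq, Complex.mul_im]; ring
    rw [Finset.sum_congr rfl fun i _ => h1 i, ← Finset.mul_sum]
    have h2 : (ζ0 ^ 2).im = 2 * (ξ0 * η0) := by
      rw [sq, Complex.mul_im, ← hξ0, ← hη0]; ring
    rw [h2, ← hCdef, hcdef]; ring
  set ns : ℝ := Complex.normSq w with hnsdef
  have hns : ns = (a - b) ^ 2 + 4 * c ^ 2 := by
    rw [hnsdef, Complex.normSq_apply, hwre, hwim]; ring
  clear_value ξ0 η0 A B C a b c ns
  -- |w|² ≥ b²
  have hkey : b ^ 2 ≤ ns := by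
    rw [hns, hadef, hbdef, hcdef]
    exact key_aux ξ0 η0 A B C hA0 hB0 hCS (hbdef ▸ hb)
  have hns_pos : 0 < ns := pos_aux b ns hb hkey
  have hwne : w ≠ 0 := by
    intro h; rw [hnsdef, h] at hns_pos; simp at hns_pos
  set M : ℝ := ‖w‖ with hMdef
  have hM2 : M ^ 2 = ns := by rw [hMdef, hnsdef, Complex.sq_norm]
  have hM_pos : 0 < M := by
    rw [hMdef]; exact norm_pos_iff.mpr hwne
  clear_value M
  have hMb : -b ≤ M := absge_aux M b ns hkey hM2 hM_pos.le hb
  set E : ℝ := ‖ζ0‖ ^ 2 + ∑ i, ‖ζv i‖ ^ 2 with hEdef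
  have habs0 : ‖ζ0‖ ^ 2 = ξ0 ^ 2 + η0 ^ 2 := by
    rw [Complex.sq_norm, Complex.normSq_apply, ← hξ0, ← hη0]; ring
  have hsum_nonneg : (0:ℝ) ≤ ∑ i, ‖ζv i‖ ^ 2 :=
    Finset.sum_nonneg fun i _ => sq_nonneg _
  have hE_b : -b ≤ E := by
    rw [hEdef, habs0, hbdef]
    nlinarith [sq_nonneg ξ0, hsum_nonneg, hB0]
  clear_value E
  have hE0 : 0 ≤ E := le_trans (by linarith) hE_b
  -- M ≤ E
  have hME : M ≤ E := by
    have h1 : ‖w‖ ≤ ‖-ζ0 ^ 2‖ + ‖∑ i, (ζv i) ^ 2‖ := by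
      rw [hw]; exact norm_add_le _ _
    have h2 : ‖-ζ0 ^ 2‖ = ‖ζ0‖ ^ 2 := by
      rw [norm_neg, norm_pow]
    have h3 : ‖∑ i, (ζv i) ^ 2‖ ≤ ∑ i, ‖ζv i‖ ^ 2 := by
      refine le_trans (norm_sum_le _ _) ?_
      refine le_of_eq (Finset.sum_congr rfl fun i _ => ?_)
      rw [norm_pow]
    rw [hMdef, hEdef]; linarith
  -- imaginary-part identity for the primed vector
  have hdivim : ∀ z : ℂ, (z / w).im = (z.im * w.re - z.re * w.im) / ns := by
    intro z; rw [Complex.div_im, hnsdef]; ring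
  have hns_ne : ns ≠ 0 := ne_of_gt hns_pos
  have H_im : -((ζ0 / w).im) ^ 2 + ∑ i, ((ζv i / w).im) ^ 2 = b / ns := by
    have hi : ∀ i : Fin n, ((ζv i / w).im) ^ 2
        = ((ζv i).im * w.re - (ζv i).re * w.im) ^ 2 / ns ^ 2 := by
      intro i; rw [hdivim, div_pow]
    rw [hdivim, Finset.sum_congr rfl fun i _ => hi i, ← Finset.sum_div]
    have hnum : ∑ i, ((ζv i).im * w.re - (ζv i).re * w.im) ^ 2
        = B * w.re ^ 2 - C * (2 * (w.re * w.im)) + A * w.im ^ 2 := by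
      have h1 : ∀ i : Fin n, ((ζv i).im * w.re - (ζv i).re * w.im) ^ 2
          = (ζv i).im ^ 2 * w.re ^ 2
            - ((ζv i).re * (ζv i).im) * (2 * (w.re * w.im))
            + (ζv i).re ^ 2 * w.im ^ 2 := by intro i; ring
      rw [Finset.sum_congr rfl fun i _ => h1 i, Finset.sum_add_distrib,
        Finset.sum_sub_distrib, ← Finset.sum_mul, ← Finset.sum_mul, ← Finset.sum_mul,
        ← hAdef, ← hBdef, ← hCdef]
    rw [hnum, div_pow, hwre, hwim]
    rw [← neg_div, ← add_div, div_eq_div_iff (pow_ne_zero 2 hns_ne) hns_ne]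
    rw [hns, ← hη0, ← hξ0, hadef, hbdef, hcdef]
    ring
  -- norm identity for the primed vector
  have H_abs : ‖ζ0 / w‖ ^ 2 + ∑ i, ‖ζv i / w‖ ^ 2 = E / ns := by
    have hi : ∀ z : ℂ, ‖z / w‖ ^ 2 = ‖z‖ ^ 2 / ns := by
      intro z
      rw [norm_div, div_pow, Complex.sq_norm w, ← hnsdef]
    rw [hi, Finset.sum_congr rfl fun i _ => hi (ζv i), ← Finset.sum_div, hEdef, add_div]
  -- set up S
  set S : ℝ := Sfun n ζ0 ζv with hSdef
  set s : ℝ := Real.sqrt (-b) with hsdef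
  have hs_pos : 0 < s := by rw [hsdef]; exact Real.sqrt_pos.2 (by linarith)
  have hs2 : s ^ 2 = -b := by rw [hsdef]; exact Real.sq_sqrt (by linarith)
  have h1S : 1 / s ≤ S := by
    rw [hSdef, Sfun, hsdef, hbdef, ← hη0, ← hBdef]
    exact le_max_left _ _
  have hES : Real.sqrt E ≤ S := by
    rw [hSdef, Sfun, hEdef]
    exact le_max_right _ _
  clear_value S s
  have hS0 : 0 ≤ S := le_trans (Real.sqrt_nonneg E) hES
  have h1 : 1 ≤ S * s := onele_aux s S hs_pos h1S
  have hE_S : E ≤ S ^ 2 := sqle_aux E S (Real.sqrt E) (Real.sq_sqrt hE0) hES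
    (Real.sqrt_nonneg E)
  -- rewrite the goal
  rw [Sfun]
  rw [H_im, H_abs]
  have hrw1 : 1 / Real.sqrt (-(b / ns)) = M / s := by
    rw [← neg_div, Real.sqrt_div (by linarith : (0:ℝ) ≤ -b), one_div_div, hsdef,
      ← hM2, Real.sqrt_sq hM_pos.le]
  have hrw2 : Real.sqrt (E / ns) = Real.sqrt E / M := by
    rw [Real.sqrt_div hE0, ← hM2, Real.sqrt_sq hM_pos.le]
  rw [hrw1, hrw2]
  exact max_le (endA_aux M s S E hs_pos hME hE_S h1 hM_pos.le)
    (endB_aux M s S (Real.sqrt E) hM_pos (by rw [hs2]; exact hMb) h1 hES hS0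
      (Real.sqrt_nonneg E))
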